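/- Let B = (𝔽₂² × 𝔽₃, +, ∘) be the skew brace where + is componentwise addition and (x, z) ∘ (y, z') = (x + Mᶻ y, z + z') with M = [[1,1],[1,0]] ∈ GL₂(𝔽₂). Identify Aut(B,+) with GL₂(𝔽₂) × 𝔽₃ˣ, acting by (N,u)·(x,z) = (Nx, uz). Then the automorphism group of the skew brace B (maps preserving both + and ∘) equals { (N,1) : N ∈ ⟨M⟩ } ∪ { (N,−1) : N ∈ GL₂(𝔽₂), N ∉ ⟨M⟩ }. -/

import Mathlib

/-- The matrix `M = [[1,1],[1,0]]` over `𝔽₂`. -/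
def MB : Matrix (Fin 2) (Fin 2) (ZMod 2) := !![1, 1; 1, 0]

/-- The multiplicative operation of the skew brace `B = (𝔽₂² × 𝔽₃, +, ∘)`:
`(x, z) ∘ (y, z') = (x + Mᶻ y, z + z')`. -/
def circB (a b : (Fin 2 → ZMod 2) × ZMod 3) : (Fin 2 → ZMod 2) × ZMod 3 :=
  (a.1 + (MB ^ a.2.val).mulVec b.1, a.2 + b.2)

/-- `M` as an element of `GL₂(𝔽₂)`. -/
def Mgl : GL (Fin 2) (ZMod 2) := ⟨MB, MB ^ 2, by decide, by decide⟩

abbrev M2 := Matrix (Fin 2) (Fin 2) (ZMod 2)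

lemma L_ext : ∀ A B : M2, (∀ y, A.mulVec y = B.mulVec y) → A = B := by decide

lemma L_inv : ∀ A : M2, (∀ x y, A.mulVec x = A.mulVec y → x = y) →
    ∃ B, A*B = 1 ∧ B*A = 1 := by decide

lemma L1 : ∀ A B : M2, A*B = 1 → A*MB = MB*A → (A = 1 ∨ A = MB ∨ A = MB*MB) := by decide

lemma L2 : ∀ A B : M2, A*B = 1 → A*MB = MB*MB*A → ¬(A = 1 ∨ A = MB ∨ A = MB*MB) := by decide

lemma L4 : ∀ A : M2, (A = 1 ∨ A = MB ∨ A = MB*MB) →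
    ∀ z : ZMod 3, A * MB ^ z.val = MB ^ (((1:ZMod 3)*z).val) * A := by decide

lemma L3 : ∀ A B : M2, A*B = 1 → B*A = 1 → ¬(A = 1 ∨ A = MB ∨ A = MB*MB) →
    ∀ z : ZMod 3, A * MB ^ z.val = MB ^ (((-1:ZMod 3)*z).val) * A := by decide

lemma Mgl_cube : Mgl ^ 3 = 1 := by
  apply Units.ext
  rw [Units.val_pow_eq_pow_val]
  show (MB ^ 3 : M2) = 1
  decide

lemma mem_zpowers_iff' (N : GL (Fin 2) (ZMod 2)) :
    N ∈ Subgroup.zpowers Mgl ↔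
      ((N : M2) = 1 ∨ (N : M2) = MB ∨ (N : M2) = MB*MB) := by
  constructor
  · rintro ⟨k, hk⟩
    have h3 : Mgl ^ (3:ℤ) = 1 := by
      rw [show (3:ℤ) = ((3:ℕ):ℤ) from rfl, zpow_natCast]; exact Mgl_cube
    have hk2 : Mgl ^ k = Mgl ^ (k % 3) := by
      conv_lhs => rw [← Int.emod_add_mul_ediv k 3]
      rw [zpow_add, zpow_mul, h3, one_zpow, mul_one]
    simp only at hk
    rw [← hk, hk2]
    have hr : k % 3 = 0 ∨ k % 3 = 1 ∨ k % 3 = 2 := by omega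
    rcases hr with h | h | h <;> rw [h]
    · left; rfl
    · right; left; rw [zpow_one]; rfl
    · right; right
      show ((Mgl ^ (2:ℤ) : GL (Fin 2) (ZMod 2)) : M2) = MB * MB
      rw [show (2:ℤ) = ((2:ℕ):ℤ) from rfl, zpow_natCast, Units.val_pow_eq_pow_val, sq]; rfl
  · rintro (h | h | h)
    · exact ⟨0, Units.ext (by simpa using h.symm)⟩
    · exact ⟨1, Units.ext (by
        show ((Mgl ^ (1:ℤ) : GL (Fin 2) (ZMod 2)) : M2) = (N : M2)
        rw [zpow_one]; exact h.symm)⟩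
    · refine ⟨2, Units.ext ?_⟩
      show ((Mgl ^ (2:ℤ) : GL (Fin 2) (ZMod 2)) : M2) = (N : M2)
      rw [show (2:ℤ) = ((2:ℕ):ℤ) from rfl, zpow_natCast, Units.val_pow_eq_pow_val, sq]
      exact h.symm

/-- The automorphism group of the skew brace `B = (𝔽₂² × 𝔽₃, +, ∘)` consists, under
the identification `Aut(B,+) = GL₂(𝔽₂) × 𝔽₃ˣ` with `(N, u) · (x, z) = (Nx, uz)`,
exactly of the pairs `(N, 1)` with `N ∈ ⟨M⟩` and `(N, -1)` with `N ∉ ⟨M⟩`. -/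
theorem aut_of_order12_skewBrace (f : (Fin 2 → ZMod 2) × ZMod 3 → (Fin 2 → ZMod 2) × ZMod 3) :
    (Function.Bijective f ∧ (∀ a b, f (a + b) = f a + f b) ∧
      (∀ a b, f (circB a b) = circB (f a) (f b))) ↔
    ∃ (N : GL (Fin 2) (ZMod 2)) (u : (ZMod 3)ˣ),
      (∀ (x : Fin 2 → ZMod 2) (z : ZMod 3),
        f (x, z) = ((N : Matrix (Fin 2) (Fin 2) (ZMod 2)).mulVec x, (u : ZMod 3) * z)) ∧
      ((u = 1 ∧ N ∈ Subgroup.zpowers Mgl) ∨ (u = -1 ∧ N ∉ Subgroup.zpowers Mgl)) := by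
  constructor
  · rintro ⟨⟨finj, fsurj⟩, hadd, hcirc⟩
    have f0 : f 0 = 0 := by
      have h := hadd 0 0
      rw [add_zero] at h
      exact left_eq_add.mp h
    have h2 : ∀ x : Fin 2 → ZMod 2, (f (x, 0)).2 = 0 := by
      intro x
      have hx : (x, (0:ZMod 3)) + (x, 0) = (0 : (Fin 2 → ZMod 2) × ZMod 3) := by
        refine Prod.ext ?_ ?_
        · show x + x = 0
          funext i
          exact (by decide : ∀ a : ZMod 2, a + a = 0) (x i)
        · show (0:ZMod 3) + 0 = 0
          rw [add_zero]
      have h := hadd (x, 0) (x, 0)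
      rw [hx, f0] at h
      have h2' := congrArg Prod.snd h
      simp only [Prod.snd_add, Prod.snd_zero] at h2'
      exact (by decide : ∀ a : ZMod 3, 0 = a + a → a = 0) _ h2'
    have h1 : ∀ z : ZMod 3, (f (0, z)).1 = 0 := by
      intro z
      have hz : ((0 : Fin 2 → ZMod 2), z) + (0, z) + (0, z) = 0 := by
        refine Prod.ext ?_ ?_
        · show (0:Fin 2 → ZMod 2) + 0 + 0 = 0
          simp
        · show z + z + z = 0
          exact (by decide : ∀ a : ZMod 3, a + a + a = 0) z
      have h := hadd (((0 : Fin 2 → ZMod 2), z) + (0, z)) (0, z)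
      rw [hadd ((0 : Fin 2 → ZMod 2), z) (0, z)] at h
      rw [hz, f0] at h
      have h1' := congrArg Prod.fst h
      simp only [Prod.fst_add, Prod.fst_zero] at h1'
      funext i
      have hi := congrFun h1' i
      simp only [Pi.add_apply, Pi.zero_apply] at hi
      exact (by decide : ∀ a : ZMod 2, 0 = a + a + a → a = 0) _ hi
    have hsplit : ∀ x z, f (x, z) = ((f (x, 0)).1, (f (0, z)).2) := by
      intro x z
      have hxz : (x, z) = (x, (0:ZMod 3)) + ((0 : Fin 2 → ZMod 2), z) := by
        refine Prod.ext ?_ ?_ <;> simp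
      rw [hxz, hadd]
      refine Prod.ext ?_ ?_
      · simp only [Prod.fst_add, h1, add_zero]
      · simp only [Prod.snd_add, h2, zero_add]
    set u0 := (f ((0:Fin 2 → ZMod 2), (1:ZMod 3))).2 with hu0def
    have hzlin : ∀ z : ZMod 3, (f (0, z)).2 = u0 * z := by
      intro z
      rcases (by decide : ∀ w : ZMod 3, w = 0 ∨ w = 1 ∨ w = 2) z with rfl | rfl | rfl
      · rw [show ((0:Fin 2 → ZMod 2), (0:ZMod 3)) = 0 from rfl, f0, mul_zero]
        rfl
      · rw [mul_one]
      · have h22 : ((0:Fin 2 → ZMod 2), (2:ZMod 3)) = (0, 1) + (0, 1) := by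
          refine Prod.ext ?_ ?_
          · show (0:Fin 2 → ZMod 2) = 0 + 0; simp
          · show (2:ZMod 3) = 1 + 1; decide
        rw [h22, hadd]
        simp only [Prod.snd_add]
        rw [mul_two]
    -- the matrix of the 2-part
    set c0 := (f ((![1,0] : Fin 2 → ZMod 2), (0:ZMod 3))).1 with hc0def
    set c1 := (f ((![0,1] : Fin 2 → ZMod 2), (0:ZMod 3))).1 with hc1def
    set Nmat : M2 := Matrix.of ![![c0 0, c1 0], ![c0 1, c1 1]] with hNdef
    have hcols : ∀ a b c d : ZMod 2,
        (Matrix.of ![![a,b],![c,d]]).mulVec ![1,0] = ![a,c] ∧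
        (Matrix.of ![![a,b],![c,d]]).mulVec ![0,1] = ![b,d] ∧
        (Matrix.of ![![a,b],![c,d]]).mulVec ![1,1] = ![a+b, c+d] ∧
        (Matrix.of ![![a,b],![c,d]]).mulVec 0 = 0 := by decide
    have gadd : ∀ x y : Fin 2 → ZMod 2, (f (x + y, 0)).1 = (f (x, 0)).1 + (f (y, 0)).1 := by
      intro x y
      have hxy : ((x + y : Fin 2 → ZMod 2), (0:ZMod 3)) = (x, 0) + (y, 0) := by
        refine Prod.ext ?_ ?_
        · rfl
        · show (0:ZMod 3) = 0 + 0; rw [add_zero]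
      rw [hxy, hadd, Prod.fst_add]
    have hg : ∀ x, (f (x, 0)).1 = Nmat.mulVec x := by
      intro x
      rcases (by decide : ∀ v : Fin 2 → ZMod 2,
          v = 0 ∨ v = ![1,0] ∨ v = ![0,1] ∨ v = ![1,1]) x with rfl | rfl | rfl | rfl
      · rw [hNdef, (hcols _ _ _ _).2.2.2,
          show ((0:Fin 2 → ZMod 2), (0:ZMod 3)) = 0 from rfl, f0]
        rfl
      · rw [hNdef, (hcols _ _ _ _).1]
        funext i
        fin_cases i <;> rfl
      · rw [hNdef, (hcols _ _ _ _).2.1]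
        funext i
        fin_cases i <;> rfl
      · rw [hNdef, (hcols _ _ _ _).2.2.1]
        rw [show (![1,1] : Fin 2 → ZMod 2) = ![1,0] + ![0,1] by decide, gadd]
        rw [← hc0def, ← hc1def]
        funext i
        fin_cases i <;> simp [Pi.add_apply]
    have hform : ∀ x z, f (x, z) = (Nmat.mulVec x, u0 * z) := by
      intro x z
      rw [hsplit, hg, hzlin]
    have ginj : ∀ x y, Nmat.mulVec x = Nmat.mulVec y → x = y := by
      intro x y hxy
      have hfe : f (x, 0) = f (y, 0) := by rw [hform, hform, hxy]
      have := finj hfe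
      exact congrArg Prod.fst this
    obtain ⟨Bm, hB1, hB2⟩ := L_inv Nmat ginj
    have hu0ne : u0 ≠ 0 := by
      intro h
      have hfe : f ((0:Fin 2 → ZMod 2), (1:ZMod 3)) = f 0 := by
        rw [f0, hform, h, zero_mul, Matrix.mulVec_zero]
        rfl
      have h01 := finj hfe
      exact absurd (congrArg Prod.snd h01) (by decide)
    have key : ∀ (z : ZMod 3) (y : Fin 2 → ZMod 2),
        Nmat.mulVec ((MB ^ z.val).mulVec y) = (MB ^ (u0 * z).val).mulVec (Nmat.mulVec y) := by
      intro z y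
      have h := hcirc ((0 : Fin 2 → ZMod 2), z) (y, 0)
      have hl : circB ((0:Fin 2 → ZMod 2), z) (y, 0) = ((MB ^ z.val).mulVec y, z) := by
        refine Prod.ext ?_ ?_
        · show (0:Fin 2 → ZMod 2) + _ = _; rw [zero_add]
        · show z + 0 = z; rw [add_zero]
      rw [hl, hform, hform, hform] at h
      have h' := congrArg Prod.fst h
      simp only [circB, Matrix.mulVec_zero, zero_add] at h'
      exact h'
    have key1 : Nmat * MB = MB ^ ((u0 * 1 : ZMod 3)).val * Nmat := by
      apply L_ext
      intro y
      have h := key 1 y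
      rw [show ((1:ZMod 3)).val = 1 from rfl, pow_one] at h
      rw [Matrix.mulVec_mulVec, Matrix.mulVec_mulVec] at h
      exact h
    rcases (by decide : ∀ a : ZMod 3, a ≠ 0 → a = 1 ∨ a = 2) u0 hu0ne with hu | hu
    · -- u0 = 1
      have hcomm : Nmat * MB = MB * Nmat := by
        rw [key1, hu, show ZMod.val ((1:ZMod 3) * 1) = 1 from rfl, pow_one]
      refine ⟨⟨Nmat, Bm, hB1, hB2⟩, 1, ?_, Or.inl ⟨rfl, ?_⟩⟩
      · intro x z
        rw [hform, hu]
        simp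
      · rw [mem_zpowers_iff']
        exact L1 Nmat Bm hB1 hcomm
    · -- u0 = 2
      have hanti : Nmat * MB = MB * MB * Nmat := by
        rw [key1, hu, show ((2 * 1 : ZMod 3)).val = 2 by decide, pow_two]
      refine ⟨⟨Nmat, Bm, hB1, hB2⟩, -1, ?_, Or.inr ⟨rfl, ?_⟩⟩
      · intro x z
        rw [hform, hu]
        have : ((-1 : (ZMod 3)ˣ) : ZMod 3) = 2 := by decide
        rw [this]
      · rw [mem_zpowers_iff']
        exact L2 Nmat Bm hB1 hanti
  · rintro ⟨N, u, hf, hcase⟩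
    have hfp : ∀ p : (Fin 2 → ZMod 2) × ZMod 3,
        f p = ((N : M2).mulVec p.1, (u : ZMod 3) * p.2) := fun p => hf p.1 p.2
    have hNinv1 : (N : M2) * ((N⁻¹ : GL (Fin 2) (ZMod 2)) : M2) = 1 := by
      rw [← Units.val_mul, mul_inv_cancel, Units.val_one]
    have hNinv2 : ((N⁻¹ : GL (Fin 2) (ZMod 2)) : M2) * (N : M2) = 1 := by
      rw [← Units.val_mul, inv_mul_cancel, Units.val_one]
    have keyM : ∀ z : ZMod 3,
        (N : M2) * MB ^ z.val = MB ^ (((u : ZMod 3) * z)).val * (N : M2) := by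
      rcases hcase with ⟨rfl, hmem⟩ | ⟨rfl, hmem⟩
      · intro z
        have := L4 (N : M2) ((mem_zpowers_iff' N).mp hmem) z
        simpa using this
      · intro z
        have := L3 (N : M2) _ hNinv1 hNinv2
          (fun hmem' => hmem ((mem_zpowers_iff' N).mpr hmem')) z
        simpa using this
    refine ⟨?_, ?_, ?_⟩
    · refine Function.bijective_iff_has_inverse.mpr
        ⟨fun p => (((N⁻¹ : GL (Fin 2) (ZMod 2)) : M2).mulVec p.1,
          ((u⁻¹ : (ZMod 3)ˣ) : ZMod 3) * p.2), ?_, ?_⟩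
      · intro p
        rw [hfp]
        refine Prod.ext ?_ ?_
        · show ((N⁻¹ : GL (Fin 2) (ZMod 2)) : M2).mulVec ((N : M2).mulVec p.1) = p.1
          rw [Matrix.mulVec_mulVec, hNinv2, Matrix.one_mulVec]
        · show ((u⁻¹ : (ZMod 3)ˣ) : ZMod 3) * ((u : ZMod 3) * p.2) = p.2
          rw [← mul_assoc, ← Units.val_mul, inv_mul_cancel, Units.val_one, one_mul]
      · intro p
        rw [hfp]
        refine Prod.ext ?_ ?_
        · show (N : M2).mulVec (((N⁻¹ : GL (Fin 2) (ZMod 2)) : M2).mulVec p.1) = p.1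
          rw [Matrix.mulVec_mulVec, hNinv1, Matrix.one_mulVec]
        · show (u : ZMod 3) * (((u⁻¹ : (ZMod 3)ˣ) : ZMod 3) * p.2) = p.2
          rw [← mul_assoc, ← Units.val_mul, mul_inv_cancel, Units.val_one, one_mul]
    · intro a b
      rw [hfp, hfp, hfp]
      refine Prod.ext ?_ ?_
      · show (N : M2).mulVec (a + b).1 = _
        simp only [Prod.fst_add, Matrix.mulVec_add]
      · show (u : ZMod 3) * (a + b).2 = _
        simp only [Prod.snd_add, mul_add]
    · intro a b
      rw [hfp, hfp, hfp]
      refine Prod.ext ?_ ?_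
      · show (N : M2).mulVec (circB a b).1 =
          (N : M2).mulVec a.1 + (MB ^ (((u : ZMod 3) * a.2)).val).mulVec ((N : M2).mulVec b.1)
        show (N : M2).mulVec (a.1 + (MB ^ a.2.val).mulVec b.1) = _
        rw [Matrix.mulVec_add, Matrix.mulVec_mulVec, Matrix.mulVec_mulVec, keyM]
      · show (u : ZMod 3) * (circB a b).2 = _
        show (u : ZMod 3) * (a.2 + b.2) = _
        rw [mul_add]
        rfl
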